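/- Entropy stability of the stabilized flux (Theorem 2, stability inequality). Let left and right ideal MHD states be given (both with ρ > 0, p > 0), let f*ᵉᶜ be the entropy conserving numerical flux of Theorem 1, and let D be any real symmetric positive semidefinite 8×8 matrix. Then the entropy stable flux f* = f*ᵉᶜ − (1/2)·D·⟦v⃗⟧ satisfies the discrete entropy inequality ⟦v⃗⟧·f* − ⟦v⃗·f⃗⟧ − ⟦B₁⟧·(⟨z₁z₂⟩⟨z₆⟩ + ⟨z₁z₃⟩⟨z₇⟩ + ⟨z₁z₄⟩⟨z₈⟩) ≤ −⟦F⟧, with equality if and only if ⟦v⃗⟧ᵀD⟦v⃗⟧ = 0; in particular this applies to the ES-Roe choice D = R̂·|Λ̂|·S·R̂ᵀ, which is positive semidefinite whenever |Λ̂| and S are diagonal with nonnegative entries. -/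

import Mathlib

open Real Matrix

/-- An ideal MHD state: density, velocity components, pressure, magnetic field components. -/
structure MHD where
  ρ : ℝ
  u : ℝ
  v : ℝ
  w : ℝ
  p : ℝ
  B1 : ℝ
  B2 : ℝ
  B3 : ℝ

namespace MHD

noncomputable section

/-- ‖u⃗‖² -/
def uSq (S : MHD) : ℝ := S.u ^ 2 + S.v ^ 2 + S.w ^ 2

/-- ‖B⃗‖² -/
def BSq (S : MHD) : ℝ := S.B1 ^ 2 + S.B2 ^ 2 + S.B3 ^ 2

/-- u⃗·B⃗ -/
def uDotB (S : MHD) : ℝ := S.u * S.B1 + S.v * S.B2 + S.w * S.B3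

/-- physical entropy s = ln p − γ ln ρ -/
def ent (γ : ℝ) (S : MHD) : ℝ := Real.log S.p - γ * Real.log S.ρ

/-- total energy density ρe -/
def rhoE (γ : ℝ) (S : MHD) : ℝ := S.p / (γ - 1) + S.ρ * S.uSq / 2 + S.BSq / 2

/-- entropy density U = −ρs/(γ−1) -/
def entU (γ : ℝ) (S : MHD) : ℝ := -(S.ρ * S.ent γ) / (γ - 1)

/-- x-direction entropy flux F = uU -/
def entF (γ : ℝ) (S : MHD) : ℝ := S.u * S.entU γ

/-- the entropy variables v⃗ = U_q -/
def entVar (γ : ℝ) (S : MHD) : Fin 8 → ℝ :=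
  ![(γ - S.ent γ) / (γ - 1) - S.ρ * S.uSq / (2 * S.p),
    S.ρ * S.u / S.p, S.ρ * S.v / S.p, S.ρ * S.w / S.p,
    -(S.ρ / S.p), S.ρ * S.B1 / S.p, S.ρ * S.B2 / S.p, S.ρ * S.B3 / S.p]

/-- x-direction physical flux f⃗ -/
def fluxX (γ : ℝ) (S : MHD) : Fin 8 → ℝ :=
  ![S.ρ * S.u,
    S.ρ * S.u ^ 2 + S.p + S.BSq / 2 - S.B1 ^ 2,
    S.ρ * S.u * S.v - S.B1 * S.B2,
    S.ρ * S.u * S.w - S.B1 * S.B3,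
    S.u * (S.rhoE γ + S.p + S.BSq / 2) - S.B1 * S.uDotB,
    0,
    S.u * S.B2 - S.v * S.B1,
    S.u * S.B3 - S.w * S.B1]

/-- the parameter vector z -/
def z (S : MHD) : Fin 8 → ℝ :=
  ![Real.sqrt (S.ρ / S.p), Real.sqrt (S.ρ / S.p) * S.u, Real.sqrt (S.ρ / S.p) * S.v,
    Real.sqrt (S.ρ / S.p) * S.w, Real.sqrt (S.ρ * S.p), S.B1, S.B2, S.B3]

end

end MHD

noncomputable section

open MHD

/-- logarithmic mean: (x−y)/(ln x − ln y), with the consistent value x when x = y. -/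
def lm (x y : ℝ) : ℝ := if x = y then x else (x - y) / (Real.log x - Real.log y)

/-- arithmetic mean -/
def am (x y : ℝ) : ℝ := (x + y) / 2

/-- ⟨z_i⟩ (note: `zA L R 0` is ⟨z₁⟩, …, `zA L R 7` is ⟨z₈⟩) -/
def zA (L R : MHD) (i : Fin 8) : ℝ := am (L.z i) (R.z i)

/-- ⟨z_i z_j⟩ -/
def zP (L R : MHD) (i j : Fin 8) : ℝ := am (L.z i * L.z j) (R.z i * R.z j)

/-- ⟨z₁z₂⟩⟨z₆⟩ + ⟨z₁z₃⟩⟨z₇⟩ + ⟨z₁z₄⟩⟨z₈⟩, the x-direction source factor -/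
def srcX (L R : MHD) : ℝ :=
  zP L R 0 1 * zA L R 5 + zP L R 0 2 * zA L R 6 + zP L R 0 3 * zA L R 7

/-- the entropy conserving numerical flux of Theorem 1 (x-direction) -/
def ecFlux (γ : ℝ) (L R : MHD) : Fin 8 → ℝ :=
  ![zA L R 1 * lm (L.z 4) (R.z 4),
    zA L R 4 / zA L R 0 + (zA L R 1) ^ 2 * lm (L.z 4) (R.z 4) / zA L R 0
      + (zP L R 5 5 + zP L R 6 6 + zP L R 7 7) / 2 - zP L R 5 5,
    zA L R 1 * zA L R 2 * lm (L.z 4) (R.z 4) / zA L R 0 - zP L R 5 6,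
    zA L R 1 * zA L R 3 * lm (L.z 4) (R.z 4) / zA L R 0 - zP L R 5 7,
    (γ / (γ - 1)) * (zA L R 1 / zA L R 0) *
        (((γ + 1) / (2 * γ)) * lm (L.z 4) (R.z 4) / lm (L.z 0) (R.z 0)
          + ((γ - 1) / (2 * γ)) * (zA L R 4 / zA L R 0))
      + zA L R 1 * lm (L.z 4) (R.z 4) / 2 *
          ((zA L R 1) ^ 2 + (zA L R 2) ^ 2 + (zA L R 3) ^ 2) / (zA L R 0) ^ 2
      + (zA L R 6 / zP L R 0 0) * (zP L R 0 1 * zA L R 6 - zP L R 0 2 * zA L R 5)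
      + (zA L R 7 / zP L R 0 0) * (zP L R 0 1 * zA L R 7 - zP L R 0 3 * zA L R 5),
    0,
    (zP L R 0 1 * zA L R 6 - zP L R 0 2 * zA L R 5) / zP L R 0 0,
    (zP L R 0 1 * zA L R 7 - zP L R 0 3 * zA L R 5) / zP L R 0 0]

end

noncomputable section

open MHD

/-- the entropy balance at the interface for the stabilized flux
f* = f*ᵉᶜ − (1/2)·D·⟦v⃗⟧, namely ⟦v⃗⟧·f* − ⟦v⃗·f⃗⟧ − ⟦B₁⟧·(⟨z₁z₂⟩⟨z₆⟩+⟨z₁z₃⟩⟨z₇⟩+⟨z₁z₄⟩⟨z₈⟩). -/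
def esBalance (γ : ℝ) (L R : MHD) (D : Matrix (Fin 8) (Fin 8) ℝ) : ℝ :=
  (∑ i : Fin 8, (R.entVar γ i - L.entVar γ i) *
      (ecFlux γ L R i - (1 / 2) * D.mulVec (fun j => R.entVar γ j - L.entVar γ j) i))
    - ((∑ i : Fin 8, R.entVar γ i * R.fluxX γ i) - ∑ i : Fin 8, L.entVar γ i * L.fluxX γ i)
    - (R.B1 - L.B1) * srcX L R

end

set_option maxHeartbeats 2000000 in
lemma lm_mul_log {x y : ℝ} (hx : 0 < x) (hy : 0 < y) :
    lm x y * (Real.log y - Real.log x) = y - x := by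
  unfold lm
  by_cases h : x = y
  · simp [h]
  · rw [if_neg h]
    have hlog : Real.log x ≠ Real.log y := fun he =>
      h (Real.log_injOn_pos (Set.mem_Ioi.mpr hx) (Set.mem_Ioi.mpr hy) he)
    have hne : Real.log x - Real.log y ≠ 0 := sub_ne_zero.mpr hlog
    field_simp
    ring

lemma lm_pos {x y : ℝ} (hx : 0 < x) (hy : 0 < y) : 0 < lm x y := by
  unfold lm
  by_cases h : x = y
  · simpa [h] using hx
  · rw [if_neg h]
    rcases lt_or_gt_of_ne h with hlt | hlt
    · have : Real.log x < Real.log y := Real.log_lt_log hx hlt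
      exact div_pos_of_neg_of_neg (by linarith) (by linarith)
    · have : Real.log y < Real.log x := Real.log_lt_log hy hlt
      exact div_pos (by linarith) (by linarith)

lemma vec8_0 (a0 a1 a2 a3 a4 a5 a6 a7 : ℝ) : ![a0,a1,a2,a3,a4,a5,a6,a7] 0 = a0 := rfl
lemma vec8_1 (a0 a1 a2 a3 a4 a5 a6 a7 : ℝ) : ![a0,a1,a2,a3,a4,a5,a6,a7] 1 = a1 := rfl
lemma vec8_2 (a0 a1 a2 a3 a4 a5 a6 a7 : ℝ) : ![a0,a1,a2,a3,a4,a5,a6,a7] 2 = a2 := rfl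
lemma vec8_3 (a0 a1 a2 a3 a4 a5 a6 a7 : ℝ) : ![a0,a1,a2,a3,a4,a5,a6,a7] 3 = a3 := rfl
lemma vec8_4 (a0 a1 a2 a3 a4 a5 a6 a7 : ℝ) : ![a0,a1,a2,a3,a4,a5,a6,a7] 4 = a4 := rfl
lemma vec8_5 (a0 a1 a2 a3 a4 a5 a6 a7 : ℝ) : ![a0,a1,a2,a3,a4,a5,a6,a7] 5 = a5 := rfl
lemma vec8_6 (a0 a1 a2 a3 a4 a5 a6 a7 : ℝ) : ![a0,a1,a2,a3,a4,a5,a6,a7] 6 = a6 := rfl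
lemma vec8_7 (a0 a1 a2 a3 a4 a5 a6 a7 : ℝ) : ![a0,a1,a2,a3,a4,a5,a6,a7] 7 = a7 := rfl


set_option maxHeartbeats 1000000 in
lemma psi_lem (γ p a u v w c1 c2 c3 lp la : ℝ) (hp : p ≠ 0) (hγ1 : γ - 1 ≠ 0) :
    ((γ - (lp - γ * (lp + 2 * la))) / (γ - 1) - p * a ^ 2 * (u ^ 2 + v ^ 2 + w ^ 2) / (2 * p)) *
        (p * a ^ 2 * u)
      + p * a ^ 2 * u / p * (p * a ^ 2 * u ^ 2 + p + (c1 ^ 2 + c2 ^ 2 + c3 ^ 2) / 2 - c1 ^ 2)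
      + p * a ^ 2 * v / p * (p * a ^ 2 * u * v - c1 * c2)
      + p * a ^ 2 * w / p * (p * a ^ 2 * u * w - c1 * c3)
      + -(p * a ^ 2 / p) *
          (u * (p / (γ - 1) + p * a ^ 2 * (u ^ 2 + v ^ 2 + w ^ 2) / 2 + (c1 ^ 2 + c2 ^ 2 + c3 ^ 2) / 2
                + p + (c1 ^ 2 + c2 ^ 2 + c3 ^ 2) / 2)
            - c1 * (u * c1 + v * c2 + w * c3))
      + p * a ^ 2 * c1 / p * 0
      + p * a ^ 2 * c2 / p * (u * c2 - v * c1)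
      + p * a ^ 2 * c3 / p * (u * c3 - w * c1)
      - u * (-(p * a ^ 2 * (lp - γ * (lp + 2 * la))) / (γ - 1))
    = p * a ^ 2 * u
      + a ^ 2 * (u * (c1 ^ 2 + c2 ^ 2 + c3 ^ 2) / 2 - c1 * (u * c1 + v * c2 + w * c3)) := by
  field_simp
  ring


set_option maxHeartbeats 2000000 in
lemma hyd_lem (γ p q a b u1 v1 w1 u2 v2 w2 m1 m5 lp lq la lb : ℝ)
    (hp : p ≠ 0) (hq : q ≠ 0) (hγ1 : γ - 1 ≠ 0) (hγ0 : γ ≠ 0)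
    (hab : a + b ≠ 0) (hm1 : m1 ≠ 0) (hm5 : m5 ≠ 0)
    (h1 : m1 * (lb - la) = b - a)
    (h5 : m5 * ((lq + lb) - (lp + la)) = q * b - p * a) :
    ((γ - (lq - γ * (lq + 2 * lb))) / (γ - 1) - q * b ^ 2 * (u2 ^ 2 + v2 ^ 2 + w2 ^ 2) / (2 * q)
        - ((γ - (lp - γ * (lp + 2 * la))) / (γ - 1)
          - p * a ^ 2 * (u1 ^ 2 + v1 ^ 2 + w1 ^ 2) / (2 * p))) *
        ((a * u1 + b * u2) / 2 * m5)
      + (q * b ^ 2 * u2 / q - p * a ^ 2 * u1 / p) *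
          ((p * a + q * b) / 2 / ((a + b) / 2)
            + ((a * u1 + b * u2) / 2) ^ 2 * m5 / ((a + b) / 2))
      + (q * b ^ 2 * v2 / q - p * a ^ 2 * v1 / p) *
          ((a * u1 + b * u2) / 2 * ((a * v1 + b * v2) / 2) * m5 / ((a + b) / 2))
      + (q * b ^ 2 * w2 / q - p * a ^ 2 * w1 / p) *
          ((a * u1 + b * u2) / 2 * ((a * w1 + b * w2) / 2) * m5 / ((a + b) / 2))
      + (-(q * b ^ 2 / q) - -(p * a ^ 2 / p)) *
          (γ / (γ - 1) * ((a * u1 + b * u2) / 2 / ((a + b) / 2)) *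
              ((γ + 1) / (2 * γ) * m5 / m1
                + (γ - 1) / (2 * γ) * ((p * a + q * b) / 2 / ((a + b) / 2)))
            + (a * u1 + b * u2) / 2 * m5 / 2 *
                (((a * u1 + b * u2) / 2) ^ 2 + ((a * v1 + b * v2) / 2) ^ 2
                  + ((a * w1 + b * w2) / 2) ^ 2) / ((a + b) / 2) ^ 2)
    = q * b ^ 2 * u2 - p * a ^ 2 * u1 := by
  have hlb : lb = la + (b - a) / m1 := by field_simp; linear_combination h1
  have hlq : lq = lp + (q * b - p * a) / m5 - (b - a) / m1 := by
    rw [hlb] at h5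
    field_simp at h5 ⊢
    linear_combination h5
  rw [hlb, hlq]
  field_simp
  ring


set_option maxHeartbeats 2000000 in
lemma mag_lem (p q a b u1 v1 w1 u2 v2 w2 c1 c2 c3 d1 d2 d3 : ℝ)
    (hp : p ≠ 0) (hq : q ≠ 0) (hab : a * a + b * b ≠ 0) :
    (q * b ^ 2 * u2 / q - p * a ^ 2 * u1 / p) *
        (((c1 * c1 + d1 * d1) / 2 + (c2 * c2 + d2 * d2) / 2 + (c3 * c3 + d3 * d3) / 2) / 2
          - (c1 * c1 + d1 * d1) / 2)
      + (q * b ^ 2 * v2 / q - p * a ^ 2 * v1 / p) * (-((c1 * c2 + d1 * d2) / 2))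
      + (q * b ^ 2 * w2 / q - p * a ^ 2 * w1 / p) * (-((c1 * c3 + d1 * d3) / 2))
      + (-(q * b ^ 2 / q) - -(p * a ^ 2 / p)) *
          ((c2 + d2) / 2 / ((a * a + b * b) / 2) *
              ((a * (a * u1) + b * (b * u2)) / 2 * ((c2 + d2) / 2)
                - (a * (a * v1) + b * (b * v2)) / 2 * ((c1 + d1) / 2))
            + (c3 + d3) / 2 / ((a * a + b * b) / 2) *
                ((a * (a * u1) + b * (b * u2)) / 2 * ((c3 + d3) / 2)
                  - (a * (a * w1) + b * (b * w2)) / 2 * ((c1 + d1) / 2)))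
      + (q * b ^ 2 * d2 / q - p * a ^ 2 * c2 / p) *
          (((a * (a * u1) + b * (b * u2)) / 2 * ((c2 + d2) / 2)
              - (a * (a * v1) + b * (b * v2)) / 2 * ((c1 + d1) / 2)) / ((a * a + b * b) / 2))
      + (q * b ^ 2 * d3 / q - p * a ^ 2 * c3 / p) *
          (((a * (a * u1) + b * (b * u2)) / 2 * ((c3 + d3) / 2)
              - (a * (a * w1) + b * (b * w2)) / 2 * ((c1 + d1) / 2)) / ((a * a + b * b) / 2))
      - (d1 - c1) *
          ((a * (a * u1) + b * (b * u2)) / 2 * ((c1 + d1) / 2)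
            + (a * (a * v1) + b * (b * v2)) / 2 * ((c2 + d2) / 2)
            + (a * (a * w1) + b * (b * w2)) / 2 * ((c3 + d3) / 2))
    = b ^ 2 * (u2 * (d1 ^ 2 + d2 ^ 2 + d3 ^ 2) / 2 - d1 * (u2 * d1 + v2 * d2 + w2 * d3))
      - a ^ 2 * (u1 * (c1 ^ 2 + c2 ^ 2 + c3 ^ 2) / 2 - c1 * (u1 * c1 + v1 * c2 + w1 * c3)) := by
  have hab2 : a ^ 2 + b ^ 2 ≠ 0 := by rwa [sq, sq]
  have hab3 : b ^ 2 + a ^ 2 ≠ 0 := by rwa [add_comm, sq, sq]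
  field_simp
  ring


open MHD in
lemma zv (S : MHD) : S.z 0 = Real.sqrt (S.ρ / S.p) ∧ S.z 1 = Real.sqrt (S.ρ / S.p) * S.u ∧
    S.z 2 = Real.sqrt (S.ρ / S.p) * S.v ∧ S.z 3 = Real.sqrt (S.ρ / S.p) * S.w ∧
    S.z 4 = Real.sqrt (S.ρ * S.p) ∧ S.z 5 = S.B1 ∧ S.z 6 = S.B2 ∧ S.z 7 = S.B3 :=
  ⟨rfl, rfl, rfl, rfl, rfl, rfl, rfl, rfl⟩

open MHD in
set_option maxHeartbeats 4000000 in
lemma key (γ : ℝ) (hγ : 1 < γ) (L R : MHD)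
    (hρL : 0 < L.ρ) (hpL : 0 < L.p) (hρR : 0 < R.ρ) (hpR : 0 < R.p) :
    (∑ i : Fin 8, (R.entVar γ i - L.entVar γ i) * ecFlux γ L R i)
      - ((∑ i : Fin 8, R.entVar γ i * R.fluxX γ i) - ∑ i : Fin 8, L.entVar γ i * L.fluxX γ i)
      - (R.B1 - L.B1) * srcX L R = -(R.entF γ - L.entF γ) := by
  simp only [Fin.sum_univ_eight, entVar, fluxX, ecFlux, srcX, zA, zP, am, ent, entU, entF,
    rhoE, uSq, BSq, uDotB, z, vec8_0, vec8_1, vec8_2, vec8_3, vec8_4, vec8_5, vec8_6, vec8_7, Matrix.cons_val_zero, Matrix.cons_val_one, Matrix.head_cons,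
    Matrix.cons_val_two, Matrix.tail_cons, Matrix.cons_val_three, Matrix.cons_val_four,
    Matrix.head_fin_const]
  have hγ1 : γ - 1 ≠ 0 := sub_ne_zero.mpr (ne_of_gt hγ)
  set aL := Real.sqrt (L.ρ / L.p) with haLdef
  set aR := Real.sqrt (R.ρ / R.p) with haRdef
  have haL : 0 < aL := Real.sqrt_pos.mpr (div_pos hρL hpL)
  have haR : 0 < aR := Real.sqrt_pos.mpr (div_pos hρR hpR)
  have hρLa : L.ρ = L.p * aL ^ 2 := by
    rw [haLdef, Real.sq_sqrt (le_of_lt (div_pos hρL hpL))]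
    field_simp
  have hρRa : R.ρ = R.p * aR ^ 2 := by
    rw [haRdef, Real.sq_sqrt (le_of_lt (div_pos hρR hpR))]
    field_simp
  have e2L : Real.sqrt (L.ρ * L.p) = L.p * aL := by
    rw [show L.ρ * L.p = (L.p * aL) ^ 2 by rw [hρLa]; ring,
      Real.sqrt_sq (le_of_lt (mul_pos hpL haL))]
  have e2R : Real.sqrt (R.ρ * R.p) = R.p * aR := by
    rw [show R.ρ * R.p = (R.p * aR) ^ 2 by rw [hρRa]; ring,
      Real.sqrt_sq (le_of_lt (mul_pos hpR haR))]
  have lρL : Real.log L.ρ = Real.log L.p + 2 * Real.log aL := by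
    rw [hρLa, Real.log_mul (ne_of_gt hpL) (pow_ne_zero 2 (ne_of_gt haL)), Real.log_pow]
    push_cast; ring
  have lρR : Real.log R.ρ = Real.log R.p + 2 * Real.log aR := by
    rw [hρRa, Real.log_mul (ne_of_gt hpR) (pow_ne_zero 2 (ne_of_gt haR)), Real.log_pow]
    push_cast; ring
  rw [e2L, e2R, lρL, lρR]
  rw [hρLa, hρRa]
  set m1 := lm aL aR with hm1def
  set m5 := lm (L.p * aL) (R.p * aR) with hm5def
  have hm1 : 0 < m1 := lm_pos haL haR
  have hm5 : 0 < m5 := lm_pos (mul_pos hpL haL) (mul_pos hpR haR)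
  have h1 : m1 * (Real.log aR - Real.log aL) = aR - aL := lm_mul_log haL haR
  have h5 : m5 * ((Real.log R.p + Real.log aR) - (Real.log L.p + Real.log aL))
      = R.p * aR - L.p * aL := by
    have := lm_mul_log (mul_pos hpL haL) (mul_pos hpR haR)
    rwa [Real.log_mul (ne_of_gt hpL) (ne_of_gt haL),
      Real.log_mul (ne_of_gt hpR) (ne_of_gt haR)] at this
  have hγ0 : γ ≠ 0 := by linarith
  have hsum : aL + aR ≠ 0 := ne_of_gt (by linarith)
  have hsq : aL * aL + aR * aR ≠ 0 := ne_of_gt (by positivity)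
  have hpLne : L.p ≠ 0 := ne_of_gt hpL
  have hpRne : R.p ≠ 0 := ne_of_gt hpR
  have hR := psi_lem γ R.p aR R.u R.v R.w R.B1 R.B2 R.B3 (Real.log R.p) (Real.log aR) hpRne hγ1
  have hL := psi_lem γ L.p aL L.u L.v L.w L.B1 L.B2 L.B3 (Real.log L.p) (Real.log aL) hpLne hγ1
  have hH := hyd_lem γ L.p R.p aL aR L.u L.v L.w R.u R.v R.w m1 m5 (Real.log L.p) (Real.log R.p)
    (Real.log aL) (Real.log aR) hpLne hpRne hγ1 hγ0 hsum (ne_of_gt hm1) (ne_of_gt hm5) h1 h5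
  have hM := mag_lem L.p R.p aL aR L.u L.v L.w R.u R.v R.w L.B1 L.B2 L.B3 R.B1 R.B2 R.B3
    hpLne hpRne hsq
  linear_combination hH + hM - hR + hL

open MHD Matrix in
/-- entropy stability of the stabilized flux f* = f*ᵉᶜ − (1/2)·D·⟦v⃗⟧ for any
symmetric positive semidefinite dissipation matrix D, with equality iff ⟦v⃗⟧ᵀD⟦v⃗⟧ = 0;
and the ES-Roe choice D = R̂·|Λ̂|·S·R̂ᵀ is positive semidefinite whenever |Λ̂| and S are
diagonal with nonnegative entries. -/
theorem es_flux_entropy_stable (γ : ℝ) (hγ : 1 < γ) (L R : MHD)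
    (hρL : 0 < L.ρ) (hpL : 0 < L.p) (hρR : 0 < R.ρ) (hpR : 0 < R.p)
    (D : Matrix (Fin 8) (Fin 8) ℝ) (hD : D.PosSemidef) :
    esBalance γ L R D ≤ -(R.entF γ - L.entF γ)
    ∧ (esBalance γ L R D = -(R.entF γ - L.entF γ) ↔
        dotProduct (fun j => R.entVar γ j - L.entVar γ j)
          (D.mulVec fun j => R.entVar γ j - L.entVar γ j) = 0)
    ∧ (∀ (Rh : Matrix (Fin 8) (Fin 8) ℝ) (lam s : Fin 8 → ℝ),
        (∀ i, 0 ≤ lam i) → (∀ i, 0 ≤ s i) →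
        (Rh * Matrix.diagonal lam * Matrix.diagonal s * Rhᵀ).PosSemidef) := by
  classical
  have hkey := key γ hγ L R hρL hpL hρR hpR
  set dv : Fin 8 → ℝ := fun j => R.entVar γ j - L.entVar γ j with hdv
  have hq : 0 ≤ dotProduct dv (D.mulVec dv) := by
    have h2 := hD.dotProduct_mulVec_nonneg dv
    simpa using h2
  have hbal : esBalance γ L R D
      = -(R.entF γ - L.entF γ) - (1 / 2) * dotProduct dv (D.mulVec dv) := by
    rw [← hkey]
    unfold esBalance dotProduct
    simp only [Fin.sum_univ_eight, ← hdv]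
    ring
  refine ⟨by linarith, ⟨fun h => by linarith, fun h => by rw [hbal, h]; ring⟩, ?_⟩
  intro Rh lam s hlam hs
  have hdiag : (Matrix.diagonal (lam * s)).PosSemidef :=
    Matrix.PosSemidef.diagonal (fun i => mul_nonneg (hlam i) (hs i))
  have h := hdiag.mul_mul_conjTranspose_same Rh
  simpa [Matrix.mul_assoc, Matrix.diagonal_mul_diagonal,
    Matrix.conjTranspose_eq_transpose_of_trivial, Pi.mul_def] using h
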